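/- Let H be a finite-dimensional Hilbert space with an orthogonal decomposition given by projections {P_m}_{m=0}^{M-1} satisfying P_m P_{m'} = δ_{mm'} P_m and Σ_m P_m = I. For any density operator ρ on H, 1 - Σ_m Tr[(P_m √ρ P_m)^2] = min over σ in I of (1 - [Tr(√ρ √σ)]^2), where I = {σ density operator : σ = Σ_m P_m σ P_m} is the set of block-diagonal (incoherent) states. -/

import Mathlib

open scoped ComplexOrder

open Classical in
/-- The positive semidefinite square root of a matrix (zero if not psd). -/
noncomputable def msqrt {d : ℕ} (ρ : Matrix (Fin d) (Fin d) ℂ) : Matrix (Fin d) (Fin d) ℂ :=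
  if h : ρ.PosSemidef then
    (h.1.eigenvectorUnitary : Matrix (Fin d) (Fin d) ℂ) *
      Matrix.diagonal ((↑) ∘ (√·) ∘ h.1.eigenvalues) *
      (star h.1.eigenvectorUnitary : Matrix (Fin d) (Fin d) ℂ)
  else 0

namespace AffAux

open Matrix Complex

variable {d : ℕ}

open scoped MatrixOrder in
lemma msqrt_eq_sqrt {ρ : Matrix (Fin d) (Fin d) ℂ} (h : ρ.PosSemidef) :
    msqrt ρ = CFC.sqrt ρ := by
  rw [CFC.sqrt_eq_real_sqrt ρ h.nonneg, cfcₙ_eq_cfc, h.1.cfc_eq, msqrt, dif_pos h]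
  simp only [IsHermitian.cfc, Unitary.conjStarAlgAut_apply]
  rfl

open scoped MatrixOrder in
lemma msqrt_psd {ρ : Matrix (Fin d) (Fin d) ℂ} (h : ρ.PosSemidef) : (msqrt ρ).PosSemidef := by
  rw [msqrt_eq_sqrt h]; exact (CFC.sqrt_nonneg ρ).posSemidef

open scoped MatrixOrder in
lemma msqrt_mul_self {ρ : Matrix (Fin d) (Fin d) ℂ} (h : ρ.PosSemidef) :
    msqrt ρ * msqrt ρ = ρ := by
  rw [msqrt_eq_sqrt h]; exact CFC.sqrt_mul_sqrt_self ρ h.nonneg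

open scoped MatrixOrder in
lemma msqrt_eq {ρ B : Matrix (Fin d) (Fin d) ℂ} (hB : B.PosSemidef) (h : B * B = ρ) :
    msqrt ρ = B := by
  have hρ : ρ.PosSemidef := by
    have h2 : Bᴴ * B = ρ := by rw [hB.1.eq, h]
    exact h2 ▸ Matrix.posSemidef_conjTranspose_mul_self B
  rw [msqrt_eq_sqrt hρ]
  exact CFC.sqrt_unique h hB.nonneg

lemma trace_conjTranspose_mul (B : Matrix (Fin d) (Fin d) ℂ) :
    (Bᴴ * B).trace = ((∑ i, ∑ j, Complex.normSq (B i j) : ℝ) : ℂ) := by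
  rw [Matrix.trace]
  push_cast
  rw [Finset.sum_comm]
  refine Finset.sum_congr rfl fun j _ => ?_
  rw [Matrix.diag_apply, Matrix.mul_apply]
  refine Finset.sum_congr rfl fun i _ => ?_
  rw [Matrix.conjTranspose_apply, Complex.star_def]
  rw [Complex.normSq_eq_conj_mul_self]

lemma sum_normSq_eq_zero {Y : Matrix (Fin d) (Fin d) ℂ}
    (h : (∑ i, ∑ j, Complex.normSq (Y i j)) = 0) : Y = 0 := by
  ext i j
  have h1 := (Finset.sum_eq_zero_iff_of_nonneg
    (fun i _ => Finset.sum_nonneg fun j _ => Complex.normSq_nonneg _)).mp h i (Finset.mem_univ i)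
  have h2 := (Finset.sum_eq_zero_iff_of_nonneg
    (fun j _ => Complex.normSq_nonneg _)).mp h1 j (Finset.mem_univ j)
  simpa using Complex.normSq_eq_zero.mp h2

lemma psd_real_smul {Y : Matrix (Fin d) (Fin d) ℂ} (hY : Y.PosSemidef) {c : ℝ} (hc : 0 ≤ c) :
    (((c : ℂ)) • Y).PosSemidef := by
  exact hY.smul (by exact_mod_cast hc)

lemma cs_trace (X B : Matrix (Fin d) (Fin d) ℂ) :
    ((X * B).trace.re) ^ 2 ≤
      (∑ i, ∑ j, Complex.normSq (X i j)) * (∑ i, ∑ j, Complex.normSq (B i j)) := by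
  have h1 : (X * B).trace = ∑ p : Fin d × Fin d, X p.1 p.2 * B p.2 p.1 := by
    rw [Fintype.sum_prod_type, Matrix.trace]
    simp [Matrix.diag, Matrix.mul_apply]
  have habs : ‖(X * B).trace‖ ≤ ∑ p : Fin d × Fin d, ‖X p.1 p.2‖ * ‖B p.2 p.1‖ := by
    rw [h1]
    refine (norm_sum_le _ _).trans (le_of_eq ?_)
    exact Finset.sum_congr rfl fun p _ => norm_mul _ _
  have h2 : ((X * B).trace.re) ^ 2 ≤ ‖(X * B).trace‖ ^ 2 := by
    rw [← _root_.sq_abs ((X * B).trace.re)]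
    exact pow_le_pow_left₀ (abs_nonneg _) (Complex.abs_re_le_norm _) 2
  calc ((X * B).trace.re) ^ 2 ≤ ‖(X * B).trace‖ ^ 2 := h2
    _ ≤ (∑ p : Fin d × Fin d, ‖X p.1 p.2‖ * ‖B p.2 p.1‖) ^ 2 :=
        pow_le_pow_left₀ (norm_nonneg _) habs 2
    _ ≤ (∑ p : Fin d × Fin d, ‖X p.1 p.2‖ ^ 2) * (∑ p : Fin d × Fin d, ‖B p.2 p.1‖ ^ 2) :=
        Finset.sum_mul_sq_le_sq_mul_sq _ _ _
    _ = (∑ i, ∑ j, Complex.normSq (X i j)) * (∑ i, ∑ j, Complex.normSq (B i j)) := by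
        congr 1
        · rw [Fintype.sum_prod_type]
          exact Finset.sum_congr rfl fun i _ => Finset.sum_congr rfl fun j _ => by
            rw [Complex.sq_norm]
        · rw [Fintype.sum_prod_type, Finset.sum_comm]
          exact Finset.sum_congr rfl fun i _ => Finset.sum_congr rfl fun j _ => by
            rw [Complex.sq_norm]

lemma msqrt_support {Q S : Matrix (Fin d) (Fin d) ℂ} (hQh : Qᴴ = Q) (hQi : Q * Q = Q)
    (hS : S.PosSemidef) (hQS : Q * S * Q = S) :
    Q * msqrt S = msqrt S ∧ msqrt S * Q = msqrt S := by
  have hTp := msqrt_psd hS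
  have hTh : (msqrt S)ᴴ = msqrt S := hTp.1
  have hTT : msqrt S * msqrt S = S := msqrt_mul_self hS
  set T := msqrt S with hT
  have hz : T * (1 - Q) = 0 := by
    rw [← Matrix.conjTranspose_mul_self_eq_zero]
    have hherm : (T * (1 - Q))ᴴ = (1 - Q) * T := by
      rw [Matrix.conjTranspose_mul, hTh, Matrix.conjTranspose_sub, Matrix.conjTranspose_one, hQh]
    rw [hherm]
    have e1 : (1 - Q) * T * (T * (1 - Q)) = (1 - Q) * (T * T) * (1 - Q) := by noncomm_ring
    have e2 : (1 - Q) * Q = 0 := by rw [sub_mul, one_mul, hQi, sub_self]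
    rw [e1, hTT, ← hQS]
    calc (1 - Q) * (Q * S * Q) * (1 - Q) = ((1 - Q) * Q) * S * (Q * (1 - Q)) := by noncomm_ring
      _ = 0 := by
          rw [e2, Matrix.zero_mul, Matrix.zero_mul]
  have hTQ : T * Q = T := by
    have := hz
    rw [Matrix.mul_sub, Matrix.mul_one, sub_eq_zero] at this
    exact this.symm
  have hQT : Q * T = T := by
    calc Q * T = (Tᴴ * Qᴴ)ᴴ := by
          rw [Matrix.conjTranspose_mul, Matrix.conjTranspose_conjTranspose,
            Matrix.conjTranspose_conjTranspose]
      _ = T := by rw [hTh, hQh, hTQ, hTh]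
  exact ⟨hQT, hTQ⟩

end AffAux
open AffAux Matrix Complex in
/-- The generalized 1/2-affinity of coherence `C(ρ) = 1 - Σ_m Tr[(P_m √ρ P_m)²]`
equals the minimal 1/2-affinity distance `1 - [Tr(√ρ√σ)]²` to the set of
block-diagonal states `σ = Σ_m P_m σ P_m`. -/
theorem affinity_coherence_eq_min_dist {d M : ℕ}
    (P : Fin M → Matrix (Fin d) (Fin d) ℂ)
    (hPh : ∀ m, (P m).IsHermitian) (hPi : ∀ m, P m * P m = P m)
    (hPo : ∀ m m', m ≠ m' → P m * P m' = 0) (hPs : ∑ m, P m = 1)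
    (ρ : Matrix (Fin d) (Fin d) ℂ) (hρ : ρ.PosSemidef) (hρtr : ρ.trace = 1) :
    IsLeast {x : ℝ | ∃ σ : Matrix (Fin d) (Fin d) ℂ, σ.PosSemidef ∧ σ.trace = 1 ∧
        σ = ∑ m, P m * σ * P m ∧ x = 1 - ((msqrt ρ * msqrt σ).trace.re) ^ 2}
      (1 - ∑ m, ((P m * msqrt ρ * P m) ^ 2).trace.re) := by
  classical
  have hA : (msqrt ρ).PosSemidef := msqrt_psd hρ
  set A := msqrt ρ with hAdef
  have hAh : Aᴴ = A := hA.1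
  have hAA : A * A = ρ := msqrt_mul_self hρ
  set X : Matrix (Fin d) (Fin d) ℂ := ∑ m, P m * A * P m with hXdef
  have hXh : Xᴴ = X := by
    rw [hXdef, Matrix.conjTranspose_sum]
    refine Finset.sum_congr rfl fun m _ => ?_
    simp [Matrix.conjTranspose_mul, hAh, (hPh m).eq, Matrix.mul_assoc]
  have hPXP : ∀ k, P k * X * P k = P k * A * P k := by
    intro k
    rw [hXdef, Finset.mul_sum, Finset.sum_mul, Finset.sum_eq_single k]
    · have e : P k * (P k * A * P k) * P k = (P k * P k) * A * (P k * P k) := by noncomm_ring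
      rw [e, hPi]
    · intro m _ hm
      have e : P k * (P m * A * P m) * P k = (P k * P m) * (A * (P m * P k)) := by noncomm_ring
      rw [e, hPo k m (Ne.symm hm), Matrix.zero_mul]
    · simp
  have hXbd : ∑ k, P k * X * P k = X := by
    rw [Finset.sum_congr rfl fun k _ => hPXP k]
  have hXcomm : ∀ k, P k * X = X * P k := by
    intro k
    have h1 : P k * X = P k * X * P k := by
      conv_lhs => rw [← hXbd]
      rw [Finset.mul_sum, Finset.sum_eq_single k]
      · have e : P k * (P k * X * P k) = (P k * P k) * X * P k := by noncomm_ring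
        rw [e, hPi]
      · intro m _ hm
        have e : P k * (P m * X * P m) = (P k * P m) * (X * P m) := by noncomm_ring
        rw [e, hPo k m (Ne.symm hm), Matrix.zero_mul]
      · simp
    have h2 : X * P k = P k * X * P k := by
      conv_lhs => rw [← hXbd]
      rw [Finset.sum_mul, Finset.sum_eq_single k]
      · have e : P k * X * P k * P k = P k * X * (P k * P k) := by noncomm_ring
        rw [e, hPi]
      · intro m _ hm
        have e : P m * X * P m * P k = (P m * X) * (P m * P k) := by noncomm_ring
        rw [e, hPo m k hm, Matrix.mul_zero]
      · simp
    rw [h1, h2]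
  have hXX : X * X = ∑ m, (P m * A * P m) ^ 2 := by
    rw [hXdef, Finset.sum_mul_sum]
    refine Finset.sum_congr rfl fun m _ => ?_
    rw [Finset.sum_eq_single m]
    · rw [pow_two]
    · intro m' _ hm'
      have e : (P m * A * P m) * (P m' * A * P m') = P m * A * (P m * P m') * (A * P m') := by
        noncomm_ring
      rw [e, hPo m m' (Ne.symm hm'), Matrix.mul_zero, Matrix.zero_mul]
    · simp
  have htrAX : (A * X).trace = (X * X).trace := by
    rw [hXX, hXdef, Matrix.mul_sum, Matrix.trace_sum, Matrix.trace_sum]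
    refine Finset.sum_congr rfl fun m _ => ?_
    have key : (P m * A * P m) ^ 2 = P m * (A * P m * A * P m) := by
      rw [pow_two]
      calc (P m * A * P m) * (P m * A * P m) = P m * A * (P m * P m) * A * P m := by noncomm_ring
        _ = P m * (A * P m * A * P m) := by rw [hPi]; noncomm_ring
    have key2 : (A * P m * A * P m) * P m = A * (P m * A * P m) := by
      calc (A * P m * A * P m) * P m = A * P m * A * (P m * P m) := by noncomm_ring
        _ = A * (P m * A * P m) := by rw [hPi]; noncomm_ring
    rw [key, Matrix.trace_mul_comm (P m) (A * P m * A * P m), key2]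
  have htrX : X.trace = A.trace := by
    rw [hXdef, Matrix.trace_sum]
    have e : ∀ m, (P m * A * P m).trace = (P m * A).trace := by
      intro m
      rw [Matrix.trace_mul_comm, ← Matrix.mul_assoc, hPi]
    rw [Finset.sum_congr rfl fun m _ => e m, ← Matrix.trace_sum, ← Finset.sum_mul, hPs,
      Matrix.one_mul]
  set Nr : ℝ := ∑ i, ∑ j, Complex.normSq (X i j) with hNrdef
  have hNr : (X * X).trace = (Nr : ℂ) := by
    conv_lhs => rw [show X * X = Xᴴ * X by rw [hXh]]
    exact trace_conjTranspose_mul X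
  have hNnn : 0 ≤ Nr :=
    Finset.sum_nonneg fun i _ => Finset.sum_nonneg fun j _ => Complex.normSq_nonneg _
  have hNpos : 0 < Nr := by
    rcases hNnn.lt_or_eq with h | h
    · exact h
    · exfalso
      have hX0 : X = 0 := sum_normSq_eq_zero h.symm
      have htrA : A.trace = 0 := by rw [← htrX, hX0, Matrix.trace_zero]
      have hC : (msqrt A).PosSemidef := msqrt_psd hA
      have hCC : msqrt A * msqrt A = A := msqrt_mul_self hA
      have h0 : ((∑ i, ∑ j, Complex.normSq (msqrt A i j) : ℝ) : ℂ) = 0 := by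
        rw [← trace_conjTranspose_mul, hC.1.eq, hCC, htrA]
      have hC0 : msqrt A = 0 := sum_normSq_eq_zero (by exact_mod_cast h0)
      have hA0 : A = 0 := by rw [← hCC, hC0, Matrix.mul_zero]
      have hρ0 : ρ = 0 := by rw [← hAA, hA0, Matrix.mul_zero]
      rw [hρ0, Matrix.trace_zero] at hρtr
      exact zero_ne_one hρtr
  have hval : ∑ m, ((P m * A * P m) ^ 2).trace.re = Nr := by
    have e : (∑ m, ((P m * A * P m) ^ 2).trace) = (Nr : ℂ) := by
      rw [← Matrix.trace_sum, ← hXX, hNr]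
    calc ∑ m, ((P m * A * P m) ^ 2).trace.re = (∑ m, ((P m * A * P m) ^ 2).trace).re :=
          (Complex.re_sum _ _).symm
      _ = Nr := by rw [e, Complex.ofReal_re]
  rw [hval]
  have hXpsd : X.PosSemidef := by
    rw [hXdef]
    refine Finset.sum_induction _ _ (fun a b ha hb => ha.add hb) Matrix.PosSemidef.zero ?_
    intro m _
    have := hA.conjTranspose_mul_mul_same (P m)
    rwa [(hPh m).eq] at this
  constructor
  · -- membership : the optimal sigma
    set s : ℝ := Real.sqrt Nr with hsdef
    have hs : 0 < s := Real.sqrt_pos.mpr hNpos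
    set B₀ : Matrix (Fin d) (Fin d) ℂ := ((s⁻¹ : ℝ) : ℂ) • X with hB₀def
    have hB₀psd : B₀.PosSemidef := psd_real_smul hXpsd (inv_nonneg.mpr hs.le)
    have hBBsm : B₀ * B₀ = ((s⁻¹ * s⁻¹ : ℝ) : ℂ) • (X * X) := by
      rw [hB₀def, smul_mul_assoc, mul_smul_comm, smul_smul, ← Complex.ofReal_mul]
    have hbdXX : ∑ k, P k * (X * X) * P k = X * X := by
      have e : ∀ k, P k * (X * X) * P k = X * X * P k := by
        intro k
        calc P k * (X * X) * P k = (P k * X) * (X * P k) := by noncomm_ring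
          _ = (X * P k) * (X * P k) := by rw [hXcomm k]
          _ = X * ((P k * X) * P k) := by noncomm_ring
          _ = X * ((X * P k) * P k) := by rw [hXcomm k]
          _ = X * X * (P k * P k) := by noncomm_ring
          _ = X * X * P k := by rw [hPi]
      rw [Finset.sum_congr rfl fun k _ => e k, ← Finset.mul_sum, hPs, Matrix.mul_one]
    refine ⟨B₀ * B₀, ?_, ?_, ?_, ?_⟩
    · have h2 : B₀ᴴ * B₀ = B₀ * B₀ := by rw [hB₀psd.1.eq]
      exact h2 ▸ Matrix.posSemidef_conjTranspose_mul_self B₀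
    · have hinv : (s⁻¹ * s⁻¹) * Nr = 1 := by
        rw [← mul_inv, Real.mul_self_sqrt hNnn]
        exact inv_mul_cancel₀ hNpos.ne'
      rw [hBBsm, Matrix.trace_smul, hNr, smul_eq_mul, ← Complex.ofReal_mul, hinv,
        Complex.ofReal_one]
    · rw [hBBsm]
      have e : ∀ m, P m * (((s⁻¹ * s⁻¹ : ℝ) : ℂ) • (X * X)) * P m =
          ((s⁻¹ * s⁻¹ : ℝ) : ℂ) • (P m * (X * X) * P m) := fun m => by
        rw [mul_smul_comm, smul_mul_assoc]
      rw [Finset.sum_congr rfl fun m _ => e m, ← Finset.smul_sum, hbdXX]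
    · have hmsq : msqrt (B₀ * B₀) = B₀ := msqrt_eq hB₀psd rfl
      rw [hmsq]
      have htr : (A * B₀).trace = ((s⁻¹ * Nr : ℝ) : ℂ) := by
        rw [hB₀def, mul_smul_comm, Matrix.trace_smul, htrAX, hNr, smul_eq_mul,
          ← Complex.ofReal_mul]
      rw [htr, Complex.ofReal_re]
      have hsq : (s⁻¹ * Nr) ^ 2 = Nr := by
        rw [mul_pow, inv_pow, hsdef, Real.sq_sqrt hNnn, pow_two, ← mul_assoc,
          inv_mul_cancel₀ hNpos.ne', one_mul]
      rw [hsq]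
  · -- lower bound
    rintro x ⟨σ, hσ, hσtr, hσbd, rfl⟩
    have hBp : (msqrt σ).PosSemidef := msqrt_psd hσ
    set B := msqrt σ with hBdef
    have hBB : B * B = σ := msqrt_mul_self hσ
    have hσm : ∀ m, (P m * σ * P m).PosSemidef := fun m => by
      have := hσ.conjTranspose_mul_mul_same (P m); rwa [(hPh m).eq] at this
    have hQS : ∀ m, P m * (P m * σ * P m) * P m = P m * σ * P m := fun m => by
      calc P m * (P m * σ * P m) * P m = (P m * P m) * σ * (P m * P m) := by noncomm_ring
        _ = P m * σ * P m := by rw [hPi]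
    have hsupp : ∀ m, P m * msqrt (P m * σ * P m) = msqrt (P m * σ * P m) ∧
        msqrt (P m * σ * P m) * P m = msqrt (P m * σ * P m) := fun m =>
      msqrt_support (hPh m).eq (hPi m) (hσm m) (hQS m)
    set B' : Matrix (Fin d) (Fin d) ℂ := ∑ m, msqrt (P m * σ * P m) with hB'def
    have hB'psd : B'.PosSemidef := by
      rw [hB'def]
      refine Finset.sum_induction _ _ (fun a b ha hb => ha.add hb) Matrix.PosSemidef.zero ?_
      exact fun m _ => msqrt_psd (hσm m)
    have hB'B' : B' * B' = σ := by
      rw [hB'def, Finset.sum_mul_sum]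
      have e : ∀ m, (∑ m', msqrt (P m * σ * P m) * msqrt (P m' * σ * P m')) =
          P m * σ * P m := by
        intro m
        rw [Finset.sum_eq_single m]
        · exact msqrt_mul_self (hσm m)
        · intro m' _ hm'
          have e2 : msqrt (P m * σ * P m) * msqrt (P m' * σ * P m') =
              msqrt (P m * σ * P m) * (P m * P m') * msqrt (P m' * σ * P m') := by
            conv_lhs => rw [← (hsupp m).2, ← (hsupp m').1]
            noncomm_ring
          rw [e2, hPo m m' (Ne.symm hm'), Matrix.mul_zero, Matrix.zero_mul]
        · simp
      rw [Finset.sum_congr rfl fun m _ => e m, ← hσbd]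
    have hBeq : B = B' := by rw [hBdef]; exact msqrt_eq hB'psd hB'B'
    have hBbd : ∑ k, P k * B * P k = B := by
      have e : ∀ k, P k * B' * P k = msqrt (P k * σ * P k) := by
        intro k
        rw [hB'def, Finset.mul_sum, Finset.sum_mul, Finset.sum_eq_single k]
        · rw [(hsupp k).1, (hsupp k).2]
        · intro m _ hm
          have e2 : P k * msqrt (P m * σ * P m) * P k =
              (P k * P m) * (msqrt (P m * σ * P m) * P k) := by
            conv_lhs => rw [← (hsupp m).1]
            noncomm_ring
          rw [e2, hPo k m (Ne.symm hm), Matrix.zero_mul]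
        · simp
      rw [hBeq, Finset.sum_congr rfl fun k _ => e k, hB'def]
    have htrAB : (A * B).trace = (X * B).trace := by
      conv_lhs => rw [← hBbd]
      rw [Matrix.mul_sum, Matrix.trace_sum, hXdef, Finset.sum_mul, Matrix.trace_sum]
      refine Finset.sum_congr rfl fun k _ => ?_
      calc (A * (P k * B * P k)).trace = ((A * P k * B) * P k).trace := by
            rw [show A * (P k * B * P k) = (A * P k * B) * P k from by noncomm_ring]
        _ = (P k * (A * P k * B)).trace := (Matrix.trace_mul_comm (P k) (A * P k * B)).symm
        _ = ((P k * A * P k) * B).trace := by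
            rw [show P k * (A * P k * B) = (P k * A * P k) * B from by noncomm_ring]
    have hnormB : (∑ i, ∑ j, Complex.normSq (B i j)) = 1 := by
      have h := trace_conjTranspose_mul B
      rw [hBp.1.eq, hBB, hσtr] at h
      exact_mod_cast h.symm
    have hcs := cs_trace X B
    rw [hnormB, mul_one] at hcs
    have hfin : ((A * B).trace.re) ^ 2 ≤ Nr := by rw [htrAB]; exact hcs
    linarith
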